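/- Let G be a subgroup of PGL(2,q), Φ a generator of F_q(x)^G, α ∈ \bar{F}_q \ F_q with Φ(α) ∈ F_q, and let s ∈ G satisfy s(α) = α^q. Then the order of s in G equals the degree [F_q(α) : F_q] of the minimal polynomial of α over F_q. -/

import Mathlib

open Matrix Polynomial
open scoped LinearAlgebra.Projectivization MatrixGroups Pointwise

section AuxFF

variable {Fq : Type*} [Field Fq] [Fintype Fq] {K : Type*} [Field K] [Algebra Fq K]

lemma aux_pow_card_pow (α : K) (hi : IsIntegral Fq α) :
    α ^ (Fintype.card Fq) ^ (minpoly Fq α).natDegree = α := by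
  haveI : FiniteDimensional Fq (IntermediateField.adjoin Fq {α}) :=
    IntermediateField.adjoin.finiteDimensional hi
  haveI : Finite (IntermediateField.adjoin Fq {α}) := Module.finite_of_finite Fq
  haveI : Fintype (IntermediateField.adjoin Fq {α}) := Fintype.ofFinite _
  have hcard : Fintype.card (IntermediateField.adjoin Fq {α})
      = Fintype.card Fq ^ (minpoly Fq α).natDegree := by
    rw [Module.card_fintype (Module.finBasis Fq _)]
    rw [← IntermediateField.adjoin.finrank hi]
    simp
  have h := FiniteField.pow_card (IntermediateField.AdjoinSimple.gen Fq α)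
  rw [hcard] at h
  have h2 := congrArg (algebraMap (IntermediateField.adjoin Fq {α}) K) h
  rw [map_pow] at h2
  rwa [IntermediateField.AdjoinSimple.algebraMap_gen] at h2

lemma aux_per (α : K) (hi : IsIntegral Fq α) (t : ℕ) :
    α ^ (Fintype.card Fq) ^ ((minpoly Fq α).natDegree * t) = α := by
  induction t with
  | zero => simp
  | succ t ih =>
    rw [Nat.mul_succ, pow_add, pow_mul, ih]
    exact aux_pow_card_pow α hi

lemma aux_dvd (α : K) (hi : IsIntegral Fq α) (j : ℕ)
    (hj : α ^ (Fintype.card Fq) ^ j = α) : (minpoly Fq α).natDegree ∣ j := by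
  set q := Fintype.card Fq with hq
  set n := (minpoly Fq α).natDegree with hn
  have hq2 : 1 < q := Fintype.one_lt_card
  have hn1 : 0 < n := minpoly.natDegree_pos hi
  -- reduce to r = j % n
  set r := j % n with hr
  have hrn : r < n := Nat.mod_lt _ hn1
  have hαr : α ^ q ^ r = α := by
    have hdm : n * (j / n) + r = j := Nat.div_add_mod j n
    have : α ^ q ^ (n * (j / n) + r) = α := by rw [hdm]; exact hj
    rwa [pow_add, pow_mul, aux_per α hi] at this
  rcases Nat.eq_zero_or_pos r with h0 | hpos
  · exact Nat.dvd_of_mod_eq_zero h0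
  exfalso
  -- Frobenius setup
  set p := ringChar Fq with hp
  obtain ⟨e, hpp, hcard⟩ := FiniteField.card Fq p
  haveI : CharP K p := charP_of_injective_algebraMap (algebraMap Fq K).injective p
  haveI : ExpChar K p := ExpChar.prime hpp
  have hqpow : ∀ s : ℕ, q ^ s = p ^ ((e : ℕ) * s) := by
    intro s; rw [hq, hcard, ← pow_mul]
  set ψ := iterateFrobenius K p ((e : ℕ) * r) with hψdef
  have hψ : ∀ x : K, ψ x = x ^ q ^ r := by
    intro x; rw [hψdef, iterateFrobenius_def, hqpow]
  have halg : ∀ x : Fq, ψ (algebraMap Fq K x) = algebraMap Fq K x := by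
    intro x
    rw [hψ, ← map_pow]
    congr 1
    exact FiniteField.pow_card_pow r x
  have hcomm : ∀ (c : Fq) (x : K), ψ (c • x) = c • ψ x := by
    intro c x
    rw [Algebra.smul_def, Algebra.smul_def, _root_.map_mul, halg]
  set Ψ : K →ₐ[Fq] K := AlgHom.mk' ψ hcomm with hΨdef
  have hΨα : Ψ α = α := by
    show ψ α = α
    rw [hψ]; exact hαr
  -- every element of Fq⟮α⟯ is fixed
  have hfix : ∀ x : K, x ∈ IntermediateField.adjoin Fq {α} → x ^ q ^ r = x := by
    intro x hx
    have hx' : x ∈ Algebra.adjoin Fq ({α} : Set K) := by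
      rw [← IntermediateField.adjoin_simple_toSubalgebra_of_isAlgebraic hi.isAlgebraic] at *
      exact hx
    rw [Algebra.adjoin_singleton_eq_range_aeval] at hx'
    obtain ⟨P, hP⟩ := hx'
    have hP' : aeval α P = x := hP
    have : Ψ x = x := by
      rw [← hP', ← aeval_algHom_apply, hΨα]
    rw [← hψ x]
    exact this
  -- counting roots
  haveI : FiniteDimensional Fq (IntermediateField.adjoin Fq {α}) :=
    IntermediateField.adjoin.finiteDimensional hi
  haveI : Finite (IntermediateField.adjoin Fq {α}) := Module.finite_of_finite Fq
  haveI : Fintype (IntermediateField.adjoin Fq {α}) := Fintype.ofFinite _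
  have hcardE : Fintype.card (IntermediateField.adjoin Fq {α}) = q ^ n := by
    rw [Module.card_fintype (Module.finBasis Fq _), Fintype.card_fin,
      IntermediateField.adjoin.finrank hi]
  classical
  set f : K[X] := X ^ q ^ r - X with hf
  have hdegX : (X : K[X]).natDegree < (X ^ q ^ r : K[X]).natDegree := by
    simp only [natDegree_X, natDegree_X_pow]
    exact lt_of_lt_of_le hq2 (Nat.le_self_pow hpos.ne' q)
  have hfdeg : f.natDegree = q ^ r := by
    rw [hf, natDegree_sub_eq_left_of_natDegree_lt hdegX, natDegree_X_pow]
  have hfne : f ≠ 0 := by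
    intro h
    rw [h, natDegree_zero] at hfdeg
    have : 0 < q ^ r := Nat.pow_pos (by omega)
    omega
  set S : Finset K := Finset.univ.image
    (fun x : IntermediateField.adjoin Fq {α} => (x : K)) with hS
  have hScard : S.card = q ^ n := by
    rw [hS, Finset.card_image_of_injective _ (Subtype.val_injective), Finset.card_univ, hcardE]
  have hSroots : S ⊆ f.roots.toFinset := by
    intro x hx
    rw [hS, Finset.mem_image] at hx
    obtain ⟨y, _, hy⟩ := hx
    rw [Multiset.mem_toFinset, mem_roots hfne]
    show f.eval x = 0
    rw [hf]
    simp only [eval_sub, eval_pow, eval_X]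
    rw [← hy, hfix (y : K) y.2]
    ring
  have h1 : q ^ n ≤ q ^ r := by
    calc q ^ n = S.card := hScard.symm
    _ ≤ f.roots.toFinset.card := Finset.card_le_card hSroots
    _ ≤ Multiset.card f.roots := Multiset.toFinset_card_le _
    _ ≤ f.natDegree := card_roots' f
    _ = q ^ r := hfdeg
  have h2 : q ^ r < q ^ n := Nat.pow_lt_pow_right hq2 hrn
  omega

end AuxFF

namespace PaperPGL

section Defs

variable (F : Type*) [Field F]

lemma glInj (g : GL (Fin 2) F) :
    Function.Injective ((g : Matrix (Fin 2) (Fin 2) F).mulVecLin) := by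
  intro x y h
  have h2 := congrArg ((↑g⁻¹ : Matrix (Fin 2) (Fin 2) F).mulVecLin) h
  simp only [Matrix.mulVecLin_apply, Matrix.mulVec_mulVec] at h2
  rw [← Matrix.GeneralLinearGroup.coe_mul, inv_mul_cancel] at h2
  simpa using h2

noncomputable instance : MulAction (GL (Fin 2) F) (ℙ F (Fin 2 → F)) where
  smul g x := Projectivization.map ((g : Matrix (Fin 2) (Fin 2) F).mulVecLin) (glInj F g) x
  one_smul x := by
    show Projectivization.map _ _ x = x
    have h1 : ((1 : GL (Fin 2) F) : Matrix (Fin 2) (Fin 2) F).mulVecLin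
        = (LinearMap.id : (Fin 2 → F) →ₗ[F] (Fin 2 → F)) := by
      rw [Matrix.GeneralLinearGroup.coe_one, Matrix.mulVecLin_one]
    simp only [h1]
    rw [Projectivization.map_id]
    rfl
  mul_smul g h x := by
    show Projectivization.map _ _ x = Projectivization.map _ _ (Projectivization.map _ _ x)
    have h1 : ((g * h : GL (Fin 2) F) : Matrix (Fin 2) (Fin 2) F).mulVecLin
        = ((g : Matrix (Fin 2) (Fin 2) F).mulVecLin).comp
          ((h : Matrix (Fin 2) (Fin 2) F).mulVecLin) := by
      rw [← Matrix.mulVecLin_mul, ← Matrix.GeneralLinearGroup.coe_mul]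
    simp only [h1]
    rw [Projectivization.map_comp]
    rfl

/-- The image of `GL(2,F)` in the permutations of the projective line: `PGL(2,F)`
acting faithfully on `ℙ¹(F)`. -/
noncomputable def toPGL : GL (Fin 2) F →* Equiv.Perm (ℙ F (Fin 2 → F)) :=
  MulAction.toPermHom _ _

/-- `PGL(2,F)` as a subgroup of the permutation group of the projective line `ℙ¹(F)`. -/
noncomputable def pgl : Subgroup (Equiv.Perm (ℙ F (Fin 2 → F))) :=
  (toPGL F).range

/-- Entrywise base change `GL(2,F) →* GL(2,K)` along a ring hom. -/
noncomputable def baseChange (F K : Type*) [Field F] [Field K] (phi : F →+* K) :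
    GL (Fin 2) F →* GL (Fin 2) K :=
  Units.map phi.mapMatrix.toMonoidHom

end Defs

section Helpers

variable (F : Type*) [Field F]

lemma toPGL_apply_mk (g : GL (Fin 2) F) (v : Fin 2 → F) (hv : v ≠ 0) :
    toPGL F g (Projectivization.mk F v hv) =
      Projectivization.mk F ((g : Matrix (Fin 2) (Fin 2) F).mulVec v)
        (fun h => hv (glInj F g (by simpa [Matrix.mulVecLin_apply] using h))) := by
  have h0 : toPGL F g (Projectivization.mk F v hv)
      = Projectivization.map ((g : Matrix (Fin 2) (Fin 2) F).mulVecLin) (glInj F g)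
          (Projectivization.mk F v hv) := rfl
  rw [h0, Projectivization.map_mk]
  rfl

lemma mulVec_two {R : Type*} [CommRing R] (N : Matrix (Fin 2) (Fin 2) R) (x y : R) :
    N.mulVec ![x, y] = ![N 0 0 * x + N 0 1 * y, N 1 0 * x + N 1 1 * y] := by
  funext i
  fin_cases i <;> simp [Matrix.mulVec, Matrix.vecHead, Matrix.vecTail]

lemma vec2_fst {R : Type*} {a b c d : R} (h : ![a, b] = ![c, d]) : a = c := congrFun h 0

lemma vec2_snd {R : Type*} {a b c d : R} (h : ![a, b] = ![c, d]) : b = d := congrFun h 1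

lemma smul_one_two {R : Type*} [CommRing R] (s : R) :
    s • (1 : Matrix (Fin 2) (Fin 2) R) = !![s, 0; 0, s] := by
  simp [Matrix.one_fin_two]

end Helpers


/-- With `Φ = f/g` a generator of the `G`-invariant rational functions, `α ∉ F_q`,
`Φ(α) ∈ F_q`, and `s ∈ G` with `s(α) = α^q`, the order of `s` equals the degree of the
minimal polynomial of `α` over `F_q`. -/
theorem stmt14 (Fq : Type*) [Field Fq] [Fintype Fq] (q : ℕ) (hq : Fintype.card Fq = q)
    (K : Type*) [Field K] [Algebra Fq K] [IsAlgClosure Fq K]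
    (G : Subgroup (Equiv.Perm (ℙ Fq (Fin 2 → Fq)))) (hG : G ≤ pgl Fq)
    (f g : Polynomial Fq) (hcop : IsCoprime f g)
    (hdeg : max f.natDegree g.natDegree = Nat.card G)
    (hinv : ∀ m : GL (Fin 2) Fq, toPGL Fq m ∈ G → ∀ z : K,
      algebraMap Fq K (m.val 1 0) * z + algebraMap Fq K (m.val 1 1) ≠ 0 →
      aeval z g ≠ 0 →
      aeval ((algebraMap Fq K (m.val 0 0) * z + algebraMap Fq K (m.val 0 1)) /
          (algebraMap Fq K (m.val 1 0) * z + algebraMap Fq K (m.val 1 1))) g ≠ 0 →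
      aeval ((algebraMap Fq K (m.val 0 0) * z + algebraMap Fq K (m.val 0 1)) /
          (algebraMap Fq K (m.val 1 0) * z + algebraMap Fq K (m.val 1 1))) f * aeval z g =
        aeval z f *
          aeval ((algebraMap Fq K (m.val 0 0) * z + algebraMap Fq K (m.val 0 1)) /
            (algebraMap Fq K (m.val 1 0) * z + algebraMap Fq K (m.val 1 1))) g)
    (α : K) (hα : ∀ x : Fq, algebraMap Fq K x ≠ α)
    (hgα : aeval α g ≠ 0) (y : Fq) (hy : aeval α f = algebraMap Fq K y * aeval α g)
    (m : GL (Fin 2) Fq) (hm : toPGL Fq m ∈ G)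
    (heq : algebraMap Fq K (m.val 1 0) * α ^ (q + 1) + algebraMap Fq K (m.val 1 1) * α ^ q
      - algebraMap Fq K (m.val 0 0) * α - algebraMap Fq K (m.val 0 1) = 0) :
    orderOf (toPGL Fq m) = (minpoly Fq α).natDegree := by
  clear hG hdeg hinv hy hgα hcop hm
  subst hq
  set q := Fintype.card Fq with hqdef
  have hq2 : 1 < q := Fintype.one_lt_card
  have hinj : Function.Injective (algebraMap Fq K) := (algebraMap Fq K).injective
  haveI : Algebra.IsAlgebraic Fq K := IsAlgClosure.isAlgebraic
  have hint : IsIntegral Fq α := Algebra.IsIntegral.isIntegral α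
  set n := (minpoly Fq α).natDegree with hn
  have hn1 : 0 < n := minpoly.natDegree_pos hint
  have hn2 : 2 ≤ n := by
    rcases Nat.lt_or_ge n 2 with h | h
    · exfalso
      have h1 : n = 1 := by omega
      obtain ⟨x, hx⟩ := minpoly.natDegree_eq_one_iff.mp h1
      exact hα x hx
    · exact h
  -- abbreviations
  set a' := algebraMap Fq K (m.val 0 0) with ha'
  set b' := algebraMap Fq K (m.val 0 1) with hb'
  set c' := algebraMap Fq K (m.val 1 0) with hc'
  set d' := algebraMap Fq K (m.val 1 1) with hd'
  -- Frobenius setup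
  set p := ringChar Fq with hp
  obtain ⟨e, hpp, hcard⟩ := FiniteField.card Fq p
  haveI : CharP K p := charP_of_injective_algebraMap hinj p
  haveI : ExpChar K p := ExpChar.prime hpp
  set Φ : K →+* K := iterateFrobenius K p (e : ℕ) with hΦdef
  have hΦ : ∀ x : K, Φ x = x ^ q := by
    intro x; rw [hΦdef, iterateFrobenius_def, hqdef, hcard]
  have halg : ∀ x : Fq, (algebraMap Fq K x) ^ q = algebraMap Fq K x := by
    intro x; rw [← map_pow]; congr 1; exact FiniteField.pow_card x
  -- conjugates
  set β : ℕ → K := fun j => α ^ q ^ j with hβ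
  have hβ0 : β 0 = α := by simp [hβ]
  have hβsucc : ∀ j, β (j + 1) = (β j) ^ q := by
    intro j
    show α ^ q ^ (j + 1) = (α ^ q ^ j) ^ q
    rw [pow_succ, pow_mul]
  have hper : ∀ t, α ^ q ^ (n * t) = α := fun t => aux_per α hint t
  have hβn : β n = α := aux_pow_card_pow α hint
  -- the key relation and its Frobenius translates
  have hrel : ∀ j, c' * (β j) ^ q * β j + d' * (β j) ^ q - a' * β j - b' = 0 := by
    intro j
    induction j with
    | zero =>
      rw [hβ0]
      have : α ^ (q + 1) = α ^ q * α := by rw [pow_succ]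
      rw [this] at heq
      linear_combination heq
    | succ j ih =>
      have h := congrArg Φ ih
      simp only [map_add, map_sub, _root_.map_mul, map_pow, map_zero] at h
      simp only [hΦ] at h
      rw [ha', hb', hc', hd'] at h ⊢
      rw [halg, halg, halg, halg] at h
      rw [hβsucc]
      linear_combination h
  have hlam : ∀ j, c' * β j + d' ≠ 0 := by
    intro j hzero
    by_cases hc : m.val 1 0 = 0
    · have hd : m.val 1 1 ≠ 0 := by
        intro hd
        have hdet : IsUnit (m.val).det := (Matrix.isUnit_iff_isUnit_det _).mp m.isUnit
        rw [Matrix.det_fin_two, hc, hd] at hdet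
        simp at hdet
      rw [hc', hc, map_zero, zero_mul, zero_add, hd'] at hzero
      exact hd (hinj (by rw [hzero, map_zero]))
    · have hc'ne : c' ≠ 0 := by
        rw [hc']; intro h; exact hc (hinj (by rw [h, map_zero]))
      have hβj : β j = algebraMap Fq K (-(m.val 1 1) / m.val 1 0) := by
        rw [map_div₀, map_neg, ← hc', ← hd']
        field_simp
        linear_combination hzero
      -- then α is in the range of algebraMap, contradiction
      have h1 : j + (n * (j + 1) - j) = n * (j + 1) := by
        have : j ≤ n * (j + 1) := by nlinarith
        omega
      have hstep : (β j) ^ q ^ (n * (j + 1) - j) = α := by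
        calc (β j) ^ q ^ (n * (j + 1) - j)
            = α ^ (q ^ j * q ^ (n * (j + 1) - j)) := by
              show (α ^ q ^ j) ^ q ^ (n * (j + 1) - j) = _
              rw [pow_mul]
          _ = α ^ q ^ (n * (j + 1)) := by rw [← pow_add, h1]
          _ = α := hper (j + 1)
      rw [hβj, ← map_pow] at hstep
      rw [hqdef] at hstep
      rw [FiniteField.pow_card_pow] at hstep
      exact hα _ hstep
  -- matrix over K
  set A : Matrix (Fin 2) (Fin 2) K := (m.val).map (algebraMap Fq K) with hA
  have hA00 : A 0 0 = a' := rfl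
  have hA01 : A 0 1 = b' := rfl
  have hA10 : A 1 0 = c' := rfl
  have hA11 : A 1 1 = d' := rfl
  have hAstep : ∀ j, A.mulVec ![β j, 1] = (c' * β j + d') • ![β (j + 1), 1] := by
    intro j
    rw [mulVec_two, Matrix.smul_vec2, smul_eq_mul, smul_eq_mul]
    refine Matrix.vec2_eq ?_ ?_
    · rw [hA00, hA01, hβsucc]
      linear_combination (-1 : K) * hrel j
    · rw [hA10, hA11]
      ring
  have hiter : ∀ j, (A ^ j).mulVec ![α, 1]
      = (∏ i ∈ Finset.range j, (c' * β i + d')) • ![β j, 1] := by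
    intro j
    induction j with
    | zero => simp [hβ0]
    | succ j ih =>
      rw [pow_succ']
      rw [← Matrix.mulVec_mulVec, ih, Matrix.mulVec_smul, hAstep, Finset.prod_range_succ,
        smul_smul, mul_comm]
  set μ := ∏ i ∈ Finset.range n, (c' * β i + d') with hμ
  have hμne : μ ≠ 0 := Finset.prod_ne_zero_iff.mpr (fun i _ => hlam i)
  have h1 : (A ^ n).mulVec ![α, 1] = μ • ![α, 1] := by
    rw [hiter n, hβn]
  have hαq : α ≠ α ^ q := by
    intro h
    have h1' : α ^ q ^ 1 = α := by rw [pow_one, ← h]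
    have h2' := aux_dvd α hint 1 h1'
    have := Nat.le_of_dvd one_pos h2'
    omega
  have h2 : (A ^ n).mulVec ![α ^ q, 1] = μ • ![α ^ q, 1] := by
    have hβ1 : β 1 = α ^ q := by
      show α ^ q ^ 1 = α ^ q
      rw [pow_one]
    have hcomm : A ^ n * A = A * A ^ n := by rw [← pow_succ, ← pow_succ']
    have hstep0 : A.mulVec ![α, 1] = (c' * α + d') • ![β 1, 1] := by
      have := hAstep 0
      rwa [hβ0] at this
    have hl0 : c' * α + d' ≠ 0 := by have := hlam 0; rwa [hβ0] at this
    have hkey : (c' * α + d') • (A ^ n).mulVec ![β 1, 1]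
        = (c' * α + d') • (μ • ![β 1, 1]) := by
      calc (c' * α + d') • (A ^ n).mulVec ![β 1, 1]
          = (A ^ n).mulVec ((c' * α + d') • ![β 1, 1]) := by rw [Matrix.mulVec_smul]
        _ = (A ^ n).mulVec (A.mulVec ![α, 1]) := by rw [← hstep0]
        _ = (A ^ n * A).mulVec ![α, 1] := by rw [Matrix.mulVec_mulVec]
        _ = (A * A ^ n).mulVec ![α, 1] := by rw [hcomm]
        _ = A.mulVec ((A ^ n).mulVec ![α, 1]) := by rw [← Matrix.mulVec_mulVec]
        _ = A.mulVec (μ • ![α, 1]) := by rw [h1]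
        _ = μ • A.mulVec ![α, 1] := by rw [Matrix.mulVec_smul]
        _ = μ • ((c' * α + d') • ![β 1, 1]) := by rw [hstep0]
        _ = (c' * α + d') • (μ • ![β 1, 1]) := smul_comm _ _ _
    have := smul_right_injective (Fin 2 → K) hl0 hkey
    rwa [hβ1] at this
  -- A ^ n is scalar
  have hscalar : A ^ n = μ • (1 : Matrix (Fin 2) (Fin 2) K) := by
    rw [mulVec_two, Matrix.smul_vec2, smul_eq_mul, smul_eq_mul, mul_one] at h1 h2
    have e00 := vec2_fst h1
    have e10 := vec2_snd h1
    have e01 := vec2_fst h2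
    have e11 := vec2_snd h2
    have hsub : α - α ^ q ≠ 0 := sub_ne_zero.mpr hαq
    have hN00 : (A ^ n) 0 0 = μ := by
      have hc : (A ^ n) 0 0 * (α - α ^ q) = μ * (α - α ^ q) := by
        linear_combination e00 - e01
      exact mul_right_cancel₀ hsub hc
    have hN01 : (A ^ n) 0 1 = 0 := by
      linear_combination e00 - α * hN00
    have hN10 : (A ^ n) 1 0 = 0 := by
      have hc : (A ^ n) 1 0 * (α - α ^ q) = 0 := by linear_combination e10 - e11
      rcases mul_eq_zero.mp hc with h | h
      · exact h
      · exact absurd h hsub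
    have hN11 : (A ^ n) 1 1 = μ := by
      linear_combination e10 - α * hN10
    conv_lhs => rw [Matrix.eta_fin_two (A ^ n)]
    rw [hN00, hN01, hN10, hN11, smul_one_two]
  -- transfer to Fq : M ^ n is scalar
  have hmapA : ∀ j : ℕ, (m.val ^ j).map (algebraMap Fq K) = A ^ j := by
    intro j
    rw [hA]
    have hh : ∀ M : Matrix (Fin 2) (Fin 2) Fq, M.map (algebraMap Fq K)
        = (algebraMap Fq K).mapMatrix M := fun M => rfl
    rw [hh, hh, map_pow]
  set ρ := (m.val ^ n) 0 0 with hρ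
  have hρμ : algebraMap Fq K ρ = μ := by
    have hw := congrFun (congrFun (hmapA n) 0) 0
    rw [hscalar] at hw
    simpa [Matrix.map_apply, Matrix.smul_apply, Matrix.one_apply] using hw
  have hρne : ρ ≠ 0 := by
    intro h
    rw [h, map_zero] at hρμ
    exact hμne hρμ.symm
  have hMn : m.val ^ n = ρ • (1 : Matrix (Fin 2) (Fin 2) Fq) := by
    have hw : ∀ i j, algebraMap Fq K ((m.val ^ n) i j)
        = (μ • (1 : Matrix (Fin 2) (Fin 2) K)) i j := by
      intro i j
      have := congrFun (congrFun (hmapA n) i) j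
      rw [hscalar] at this
      exact this
    have w01 : (m.val ^ n) 0 1 = 0 := by
      apply hinj
      rw [map_zero]
      simpa [Matrix.smul_apply, Matrix.one_apply] using hw 0 1
    have w10 : (m.val ^ n) 1 0 = 0 := by
      apply hinj
      rw [map_zero]
      simpa [Matrix.smul_apply, Matrix.one_apply] using hw 1 0
    have w11 : (m.val ^ n) 1 1 = ρ := by
      apply hinj
      rw [hρμ]
      simpa [Matrix.smul_apply, Matrix.one_apply] using hw 1 1
    conv_lhs => rw [Matrix.eta_fin_two (m.val ^ n)]
    rw [← hρ, w01, w10, w11, smul_one_two]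
  -- direction 1 : (toPGL m) ^ n = 1
  have hdir1 : (toPGL Fq m) ^ n = 1 := by
    rw [← map_pow]
    ext x
    induction x using Projectivization.ind with
    | h v hv =>
    rw [toPGL_apply_mk]
    have hcoe : ((m ^ n : GL (Fin 2) Fq) : Matrix (Fin 2) (Fin 2) Fq) = m.val ^ n :=
      Units.val_pow_eq_pow_val m n
    simp only [Equiv.Perm.coe_one, id_eq]
    rw [Projectivization.mk_eq_mk_iff]
    refine ⟨Units.mk0 ρ hρne, ?_⟩
    rw [hcoe, hMn, Matrix.smul_mulVec, Matrix.one_mulVec]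
    rfl
  have hdvd1 : orderOf (toPGL Fq m) ∣ n := orderOf_dvd_of_pow_eq_one hdir1
  -- direction 2 : n ∣ orderOf
  haveI : Finite (ℙ Fq (Fin 2 → Fq)) := Quotient.finite _
  set k := orderOf (toPGL Fq m) with hk
  have hk1 : toPGL Fq (m ^ k) = 1 := by rw [map_pow]; exact pow_orderOf_eq_one _
  have hfix : ∀ (v : Fin 2 → Fq) (hv : v ≠ 0),
      ∃ u : Fqˣ, (u : Fq) • v = (m.val ^ k).mulVec v := by
    intro v hv
    have happ : toPGL Fq (m ^ k) (Projectivization.mk Fq v hv)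
        = Projectivization.mk Fq v hv := by
      rw [hk1]; rfl
    rw [toPGL_apply_mk] at happ
    have hcoe : ((m ^ k : GL (Fin 2) Fq) : Matrix (Fin 2) (Fin 2) Fq) = m.val ^ k :=
      Units.val_pow_eq_pow_val m k
    rw [Projectivization.mk_eq_mk_iff] at happ
    obtain ⟨u, hu⟩ := happ
    rw [hcoe] at hu
    exact ⟨u, hu⟩
  obtain ⟨u0, hu0⟩ := hfix ![1, 0] (by
    intro h; have := congrFun h 0; simpa using this)
  obtain ⟨u1, hu1⟩ := hfix ![0, 1] (by
    intro h; have := congrFun h 1; simpa using this)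
  obtain ⟨u2, hu2⟩ := hfix ![1, 1] (by
    intro h; have := congrFun h 0; simpa using this)
  rw [mulVec_two, Matrix.smul_vec2] at hu0 hu1 hu2
  simp only [smul_eq_mul, mul_one, mul_zero, add_zero, zero_add] at hu0 hu1 hu2
  have g1 := vec2_fst hu0
  have g2 := vec2_snd hu0
  have g3 := vec2_fst hu1
  have g4 := vec2_snd hu1
  have g5 := vec2_fst hu2
  have g6 := vec2_snd hu2
  have hdiag : (m.val ^ k) 0 0 = (m.val ^ k) 1 1 := by
    linear_combination g6 - g5 - g2 + g3
  have hAk : A ^ k = (algebraMap Fq K ((m.val ^ k) 0 0)) • (1 : Matrix (Fin 2) (Fin 2) K) := by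
    rw [← hmapA k]
    conv_lhs => rw [Matrix.eta_fin_two ((m.val ^ k).map (algebraMap Fq K))]
    have m00 : (m.val ^ k).map (algebraMap Fq K) 0 0 = algebraMap Fq K ((m.val ^ k) 0 0) := rfl
    have m01 : (m.val ^ k).map (algebraMap Fq K) 0 1 = algebraMap Fq K ((m.val ^ k) 0 1) := rfl
    have m10 : (m.val ^ k).map (algebraMap Fq K) 1 0 = algebraMap Fq K ((m.val ^ k) 1 0) := rfl
    have m11 : (m.val ^ k).map (algebraMap Fq K) 1 1 = algebraMap Fq K ((m.val ^ k) 1 1) := rfl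
    rw [m00, m01, m10, m11, ← g3, ← g2, ← hdiag, map_zero, smul_one_two]
  have hres := hiter k
  rw [hAk, Matrix.smul_mulVec, Matrix.one_mulVec] at hres
  rw [Matrix.smul_vec2, Matrix.smul_vec2] at hres
  simp only [smul_eq_mul, mul_one] at hres
  have hbot := vec2_snd hres
  have htop := vec2_fst hres
  have hprodne : (∏ i ∈ Finset.range k, (c' * β i + d')) ≠ 0 :=
    Finset.prod_ne_zero_iff.mpr (fun i _ => hlam i)
  have hβk : β k = α := by
    rw [hbot] at htop
    exact (mul_left_cancel₀ hprodne htop).symm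
  have hdvd2 : n ∣ k := aux_dvd α hint k hβk
  exact Nat.dvd_antisymm hdvd1 hdvd2

end PaperPGL
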